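/- Let H be a finite abelian group of odd order with a symplectic structure B. Then (J_B)₂₁ = J_B⁻¹, where (J_B)₂₁ denotes the image of J_B under the flip of the two tensor factors of ℂ[H] ⊗ ℂ[H], and consequently the R-matrix R_B := ((J_B)₂₁)⁻¹ · J_B satisfies R_B = |H|⁻¹ Σ_{x,y ∈ H} e^{⟨x, y^{1/2}⟩} x ⊗ y. -/

import Mathlib

open TensorProduct

noncomputable section

variable (G : Type*) [Group G]

/-- Comultiplication on the group algebra `ℂ[G]`, determined by `Δ(g) = g ⊗ g`. -/
def GroupAlgebra.comul :
    MonoidAlgebra ℂ G →ₐ[ℂ] MonoidAlgebra ℂ G ⊗[ℂ] MonoidAlgebra ℂ G :=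
  (MonoidAlgebra.lift ℂ _ G)
    { toFun := fun g => MonoidAlgebra.of ℂ G g ⊗ₜ[ℂ] MonoidAlgebra.of ℂ G g
      map_one' := by simp [Algebra.TensorProduct.one_def, MonoidAlgebra.one_def]
      map_mul' := fun g h => by simp [Algebra.TensorProduct.tmul_mul_tmul] }

/-- Counit on the group algebra `ℂ[G]`, determined by `ε(g) = 1`. -/
def GroupAlgebra.counit : MonoidAlgebra ℂ G →ₐ[ℂ] ℂ :=
  (MonoidAlgebra.lift ℂ ℂ G) 1

/-- The equation `((Δ ⊗ id)(J))·(J ⊗ 1) = ((id ⊗ Δ)(J))·(1 ⊗ J)` in `ℂ[G] ⊗ ℂ[G] ⊗ ℂ[G]`. -/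
def GroupAlgebra.TwistEq (J : MonoidAlgebra ℂ G ⊗[ℂ] MonoidAlgebra ℂ G) : Prop :=
  (Algebra.TensorProduct.assoc ℂ ℂ ℂ (MonoidAlgebra ℂ G) (MonoidAlgebra ℂ G) (MonoidAlgebra ℂ G))
      ((Algebra.TensorProduct.map (GroupAlgebra.comul G) (AlgHom.id ℂ (MonoidAlgebra ℂ G))) J) *
    (Algebra.TensorProduct.assoc ℂ ℂ ℂ (MonoidAlgebra ℂ G) (MonoidAlgebra ℂ G) (MonoidAlgebra ℂ G))
      (J ⊗ₜ[ℂ] (1 : MonoidAlgebra ℂ G)) =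
  (Algebra.TensorProduct.map (AlgHom.id ℂ (MonoidAlgebra ℂ G)) (GroupAlgebra.comul G)) J *
    ((1 : MonoidAlgebra ℂ G) ⊗ₜ[ℂ] J)

/-- The equations `(ε ⊗ id)(J) = 1` and `(id ⊗ ε)(J) = 1`. -/
def GroupAlgebra.CounitEq (J : MonoidAlgebra ℂ G ⊗[ℂ] MonoidAlgebra ℂ G) : Prop :=
  (Algebra.TensorProduct.lid ℂ (MonoidAlgebra ℂ G))
      ((Algebra.TensorProduct.map (GroupAlgebra.counit G) (AlgHom.id ℂ (MonoidAlgebra ℂ G))) J) = 1 ∧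
  (Algebra.TensorProduct.rid ℂ ℂ (MonoidAlgebra ℂ G))
      ((Algebra.TensorProduct.map (AlgHom.id ℂ (MonoidAlgebra ℂ G)) (GroupAlgebra.counit G)) J) = 1

/-- A twist for the group algebra `ℂ[G]`: an invertible element of `ℂ[G] ⊗ ℂ[G]` satisfying
`((Δ ⊗ id)(J))·(J ⊗ 1) = ((id ⊗ Δ)(J))·(1 ⊗ J)` and `(ε ⊗ id)(J) = (id ⊗ ε)(J) = 1`. -/
def GroupAlgebra.IsTwist (J : MonoidAlgebra ℂ G ⊗[ℂ] MonoidAlgebra ℂ G) : Prop :=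
  IsUnit J ∧ GroupAlgebra.TwistEq G J ∧ GroupAlgebra.CounitEq G J

end


noncomputable section AuxJB

variable {H : Type*} [CommGroup H] [Fintype H]

/-- basis tensor -/
def TTaux (H : Type*) [CommGroup H] (p : H × H) :
    MonoidAlgebra ℂ H ⊗[ℂ] MonoidAlgebra ℂ H :=
  MonoidAlgebra.of ℂ H p.1 ⊗ₜ[ℂ] MonoidAlgebra.of ℂ H p.2

omit [Fintype H] in
lemma TTaux_mul (p q : H × H) : TTaux H (p * q) = TTaux H p * TTaux H q := by
  simp [TTaux, Algebra.TensorProduct.tmul_mul_tmul, map_mul]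

omit [Fintype H] in
lemma TTaux_one : TTaux H 1 = 1 := by
  simp [TTaux, Algebra.TensorProduct.one_def, MonoidAlgebra.one_def]

lemma S_mul (f g : H × H → ℂ) :
    (∑ p : H × H, f p • TTaux H p) * (∑ p : H × H, g p • TTaux H p) =
      ∑ r : H × H, (∑ p : H × H, f p * g (p⁻¹ * r)) • TTaux H r := by
  rw [Finset.sum_mul_sum]
  have h1 : ∀ p q : H × H, (f p • TTaux H p) * (g q • TTaux H q)
      = (f p * g q) • TTaux H (p * q) := by
    intro p q; rw [smul_mul_smul_comm, TTaux_mul]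
  simp_rw [h1]
  have h2 : ∀ p : H × H, ∑ q : H × H, (f p * g q) • TTaux H (p * q)
      = ∑ r : H × H, (f p * g (p⁻¹ * r)) • TTaux H r := by
    intro p
    rw [← Equiv.sum_comp (Equiv.mulLeft p) (fun r => (f p * g (p⁻¹ * r)) • TTaux H r)]
    simp
  simp_rw [h2]
  rw [Finset.sum_comm]
  exact Finset.sum_congr rfl fun r _ => (Finset.sum_smul).symm

open scoped Classical in
lemma sum_char_eq (χ : H →* ℂˣ) :
    ∑ x : H, ((χ x : ℂˣ) : ℂ) = if χ = 1 then (Fintype.card H : ℂ) else 0 := by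
  split_ifs with h
  · simp [h]
  · obtain ⟨z, hz⟩ : ∃ z, χ z ≠ 1 := by
      by_contra h'; push_neg at h'; exact h (MonoidHom.ext fun z => h' z)
    have key : ((χ z : ℂˣ) : ℂ) * ∑ x : H, ((χ x : ℂˣ) : ℂ) = ∑ x : H, ((χ x : ℂˣ) : ℂ) := by
      rw [Finset.mul_sum]
      rw [← Equiv.sum_comp (Equiv.mulLeft z) (fun x => ((χ x : ℂˣ) : ℂ))]
      simp [map_mul]
    have hz' : ((χ z : ℂˣ) : ℂ) ≠ 1 := fun hc => hz (Units.ext (by simpa using hc))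
    by_contra hS
    exact hz' (by field_simp at key; tauto)

open scoped Classical in
lemma dummy_placeholder : True := trivial

variable (B : H ≃* (H →* ℂˣ))

-- sum over second slot
open scoped Classical in
lemma sumB (w : H) :
    ∑ x : H, ((B w x : ℂˣ) : ℂ) = if w = 1 then (Fintype.card H : ℂ) else 0 := by
  rw [sum_char_eq (B w)]
  by_cases h : w = 1
  · simp [h]
  · rw [if_neg h, if_neg]
    exact fun hc => h (B.injective (by rw [hc, map_one]))

-- sum over first slot
open scoped Classical in
lemma sumA (hB : ∀ x y : H, B x y = (B y x)⁻¹) (w : H) :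
    ∑ y : H, ((B y w : ℂˣ) : ℂ) = if w = 1 then (Fintype.card H : ℂ) else 0 := by
  have hχ : ∀ a b : H, B (a * b) w = B a w * B b w := fun a b => by
    rw [map_mul]; rfl
  let χ : H →* ℂˣ := ⟨⟨fun y => B y w, by show B 1 w = 1; rw [map_one]; rfl⟩, hχ⟩
  rw [show (∑ y : H, ((B y w : ℂˣ) : ℂ)) = ∑ y : H, ((χ y : ℂˣ) : ℂ) from rfl, sum_char_eq χ]
  by_cases h : w = 1
  · rw [if_pos h, if_pos]
    ext y
    simp [χ, h]
  · rw [if_neg h, if_neg]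
    intro hc
    apply h
    apply B.injective
    rw [map_one]
    ext y
    have : B y w = 1 := by
      have := DFunLike.congr_fun hc y
      simpa [χ] using this
    rw [hB w y, this, inv_one, MonoidHom.one_apply]

end AuxJB


noncomputable section MainAux

variable {H : Type*} [CommGroup H] [Fintype H]

lemma comm_S (f : H × H → ℂ) :
    (TensorProduct.comm ℂ (MonoidAlgebra ℂ H) (MonoidAlgebra ℂ H))
        (∑ p : H × H, f p • TTaux H p)
      = ∑ p : H × H, f p.swap • TTaux H p := by
  rw [map_sum, ← Equiv.sum_comp (Equiv.prodComm H H) (fun p : H × H => f p.swap • TTaux H p)]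
  refine Finset.sum_congr rfl fun p _ => ?_
  simp [TTaux, TensorProduct.comm_tmul]

variable (B : H ≃* (H →* ℂˣ))

lemma coef1 (hB : ∀ x y : H, B x y = (B y x)⁻¹) (x y u v : H) :
    ((B x y : ℂˣ) : ℂ) * ((B (y⁻¹ * v) (x⁻¹ * u) : ℂˣ) : ℂ)
      = ((B y u⁻¹ : ℂˣ) : ℂ) * (((B v⁻¹ x : ℂˣ) : ℂ) * ((B v u : ℂˣ) : ℂ)) := by
  have h1 : ((B y x : ℂˣ) : ℂ) ≠ 0 := Units.ne_zero _
  have h2 : ((B y u : ℂˣ) : ℂ) ≠ 0 := Units.ne_zero _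
  have h3 : ((B v x : ℂˣ) : ℂ) ≠ 0 := Units.ne_zero _
  simp only [map_mul, map_inv, MonoidHom.mul_apply, MonoidHom.inv_apply, hB x y,
    Units.val_mul, Units.val_inv_eq_inv_val]
  field_simp

lemma coef3 (hB : ∀ x y : H, B x y = (B y x)⁻¹) (x y u v : H) :
    ((B y x : ℂˣ) : ℂ) * ((B (y⁻¹ * v) (x⁻¹ * u) : ℂˣ) : ℂ)
      = ((B y (x * x * u⁻¹) : ℂˣ) : ℂ) * (((B v⁻¹ x : ℂˣ) : ℂ) * ((B v u : ℂˣ) : ℂ)) := by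
  have h2 : ((B y u : ℂˣ) : ℂ) ≠ 0 := Units.ne_zero _
  have h3 : ((B v x : ℂˣ) : ℂ) ≠ 0 := Units.ne_zero _
  simp only [map_mul, map_inv, MonoidHom.mul_apply, MonoidHom.inv_apply,
    Units.val_mul, Units.val_inv_eq_inv_val]
  field_simp

lemma sq_cond (hodd : Odd (Fintype.card H)) (sq : H → H) (hsq : ∀ x : H, sq x * sq x = x)
    (u x : H) : x * x * u⁻¹ = 1 ↔ x = sq u := by
  constructor
  · intro h
    have hx : x * x = u := by
      have := mul_eq_one_iff_eq_inv.mp h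
      simpa using this
    have hg : (x * (sq u)⁻¹) ^ 2 = 1 := by
      rw [pow_two, mul_mul_mul_comm, ← mul_inv, hsq u, hx, mul_inv_cancel]
    have h2 : orderOf (x * (sq u)⁻¹) ∣ 2 := orderOf_dvd_of_pow_eq_one hg
    have hcard : orderOf (x * (sq u)⁻¹) ∣ Fintype.card H := orderOf_dvd_card
    have hdvd : orderOf (x * (sq u)⁻¹) ∣ Nat.gcd 2 (Fintype.card H) := Nat.dvd_gcd h2 hcard
    rw [Nat.Coprime.gcd_eq_one (hodd.coprime_two_left)] at hdvd
    have hone : orderOf (x * (sq u)⁻¹) = 1 := Nat.eq_one_of_dvd_one hdvd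
    have := orderOf_eq_one_iff.mp hone
    exact mul_inv_eq_one.mp this
  · rintro rfl
    rw [hsq u, mul_inv_cancel]

lemma B_sq_swap (sq : H → H) (hsq : ∀ x : H, sq x * sq x = x) (u v : H) :
    B v (sq u) = B (sq v) u := by
  have h2 : B v (sq u) = B (sq v) (sq u) * B (sq v) (sq u) := by
    conv_lhs => rw [← hsq v]
    rw [map_mul]; rfl
  have h3 : B (sq v) u = B (sq v) (sq u) * B (sq v) (sq u) := by
    conv_lhs => rw [← hsq u]
    exact map_mul _ _ _
  rw [h2, h3]

end MainAux

/-- The element `J_B = |H|⁻¹ Σ_{x,y ∈ H} e^{⟨x,y⟩} x ⊗ y` associated to a symplectic structure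
`B` on a finite abelian group `H`, where `e^{⟨x,y⟩} = B(y)(x)`. -/
noncomputable def GroupAlgebra.JB (H : Type*) [CommGroup H] [Fintype H]
    (B : H ≃* (H →* ℂˣ)) : MonoidAlgebra ℂ H ⊗[ℂ] MonoidAlgebra ℂ H :=
  (Fintype.card H : ℂ)⁻¹ •
    ∑ x : H, ∑ y : H,
      ((B y x : ℂˣ) : ℂ) • (MonoidAlgebra.of ℂ H x ⊗ₜ[ℂ] MonoidAlgebra.of ℂ H y)

/-- Let `H` be a finite abelian group of odd order with a symplectic structure `B`, and let
`sq x = x^{1/2}` denote the square root with respect to the squaring bijection.  Then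
`(J_B)₂₁ = J_B⁻¹` (so `(J_B)₂₁` is a two-sided inverse of `J_B`), and consequently the R-matrix
`R_B = ((J_B)₂₁)⁻¹ · J_B = J_B · J_B` equals `|H|⁻¹ Σ_{x,y} e^{⟨x, y^{1/2}⟩} x ⊗ y`. -/
theorem JB_flip_inverse_and_R_matrix (H : Type*) [CommGroup H] [Fintype H]
    (hodd : Odd (Fintype.card H))
    (B : H ≃* (H →* ℂˣ)) (hB : ∀ x y : H, B x y = (B y x)⁻¹)
    (sq : H → H) (hsq : ∀ x : H, sq x * sq x = x) :
    (TensorProduct.comm ℂ (MonoidAlgebra ℂ H) (MonoidAlgebra ℂ H)) (GroupAlgebra.JB H B) *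
        GroupAlgebra.JB H B = 1 ∧
    GroupAlgebra.JB H B *
        (TensorProduct.comm ℂ (MonoidAlgebra ℂ H) (MonoidAlgebra ℂ H)) (GroupAlgebra.JB H B)
        = 1 ∧
    GroupAlgebra.JB H B * GroupAlgebra.JB H B =
      (Fintype.card H : ℂ)⁻¹ •
        ∑ x : H, ∑ y : H,
          ((B (sq y) x : ℂˣ) : ℂ) • (MonoidAlgebra.of ℂ H x ⊗ₜ[ℂ] MonoidAlgebra.of ℂ H y) := by
  classical
  have hc0 : (Fintype.card H : ℂ) ≠ 0 := Nat.cast_ne_zero.mpr Fintype.card_ne_zero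
  set c : ℂ := (Fintype.card H : ℂ) with hc
  have hJ : GroupAlgebra.JB H B
      = c⁻¹ • ∑ p : H × H, ((B p.2 p.1 : ℂˣ) : ℂ) • TTaux H p := by
    rw [GroupAlgebra.JB]
    congr 1
    rw [Fintype.sum_prod_type]
    rfl
  have hflip : (TensorProduct.comm ℂ (MonoidAlgebra ℂ H) (MonoidAlgebra ℂ H))
        (GroupAlgebra.JB H B)
      = c⁻¹ • ∑ p : H × H, ((B p.1 p.2 : ℂˣ) : ℂ) • TTaux H p := by
    rw [hJ, map_smul, comm_S]
    rfl
  have g1 : (TensorProduct.comm ℂ (MonoidAlgebra ℂ H) (MonoidAlgebra ℂ H))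
      (GroupAlgebra.JB H B) * GroupAlgebra.JB H B = 1 := by
    rw [hflip, hJ, smul_mul_smul_comm, S_mul]
    have hconv : ∀ r : H × H,
        (∑ p : H × H, ((B p.1 p.2 : ℂˣ) : ℂ) * ((B (p⁻¹ * r).2 (p⁻¹ * r).1 : ℂˣ) : ℂ))
          = if r = 1 then c * c else 0 := by
      rintro ⟨u, v⟩
      rw [Fintype.sum_prod_type]
      simp only [Prod.fst_mul, Prod.snd_mul, Prod.fst_inv, Prod.snd_inv]
      have key : ∀ x y : H, ((B x y : ℂˣ) : ℂ) * ((B (y⁻¹ * v) (x⁻¹ * u) : ℂˣ) : ℂ)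
          = ((B y u⁻¹ : ℂˣ) : ℂ) * (((B v⁻¹ x : ℂˣ) : ℂ) * ((B v u : ℂˣ) : ℂ)) :=
        fun x y => coef1 B hB x y u v
      simp_rw [key, ← Finset.sum_mul]
      rw [← Finset.mul_sum, ← Finset.sum_mul, sumA B hB u⁻¹, sumB B v⁻¹]
      by_cases hu : u = 1 <;> by_cases hv : v = 1 <;>
        simp [hu, hv, Prod.ext_iff, map_one, hc]
    simp_rw [hconv, ite_smul, zero_smul]
    rw [Finset.sum_ite_eq' Finset.univ (1 : H × H) (fun r => (c * c) • TTaux H r)]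
    rw [if_pos (Finset.mem_univ _), TTaux_one, smul_smul]
    have hone : c⁻¹ * c⁻¹ * (c * c) = 1 := by field_simp
    rw [hone, one_smul]
  refine ⟨g1, ?_, ?_⟩
  · rw [mul_comm]; exact g1
  · rw [hJ, smul_mul_smul_comm, S_mul]
    have hconv : ∀ r : H × H,
        (∑ p : H × H, ((B p.2 p.1 : ℂˣ) : ℂ) * ((B (p⁻¹ * r).2 (p⁻¹ * r).1 : ℂˣ) : ℂ))
          = c * ((B (sq r.2) r.1 : ℂˣ) : ℂ) := by
      rintro ⟨u, v⟩
      rw [Fintype.sum_prod_type]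
      simp only [Prod.fst_mul, Prod.snd_mul, Prod.fst_inv, Prod.snd_inv]
      have key : ∀ x y : H, ((B y x : ℂˣ) : ℂ) * ((B (y⁻¹ * v) (x⁻¹ * u) : ℂˣ) : ℂ)
          = ((B y (x * x * u⁻¹) : ℂˣ) : ℂ) * (((B v⁻¹ x : ℂˣ) : ℂ) * ((B v u : ℂˣ) : ℂ)) :=
        fun x y => coef3 B hB x y u v
      simp_rw [key, ← Finset.sum_mul]
      have hsum : ∀ x : H, (∑ y : H, ((B y (x * x * u⁻¹) : ℂˣ) : ℂ))
          = if x = sq u then c else 0 := by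
        intro x
        rw [sumA B hB (x * x * u⁻¹)]
        exact if_congr (sq_cond hodd sq hsq u x) rfl rfl
      simp_rw [hsum, ite_mul, zero_mul]
      rw [Finset.sum_ite_eq' Finset.univ (sq u)
        (fun x => c * (((B v⁻¹ x : ℂˣ) : ℂ) * ((B v u : ℂˣ) : ℂ)))]
      rw [if_pos (Finset.mem_univ _)]
      congr 1
      have hunit : (B v⁻¹ (sq u) : ℂˣ) * B v u = B (sq v) u := by
        rw [map_inv, MonoidHom.inv_apply]
        have h1 : (sq u)⁻¹ * u = sq u := by
          rw [inv_mul_eq_iff_eq_mul]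
          exact (hsq u).symm
        calc (B v (sq u))⁻¹ * B v u = B v ((sq u)⁻¹ * u) := by
              rw [map_mul, map_inv]
          _ = B v (sq u) := by rw [h1]
          _ = B (sq v) u := B_sq_swap B sq hsq u v
      calc ((B v⁻¹ (sq u) : ℂˣ) : ℂ) * ((B v u : ℂˣ) : ℂ)
          = (((B v⁻¹ (sq u) : ℂˣ) * B v u : ℂˣ) : ℂ) := by rw [Units.val_mul]
        _ = ((B (sq v) u : ℂˣ) : ℂ) := by rw [hunit]
    simp_rw [hconv, mul_smul]
    rw [← Finset.smul_sum]
    simp only [smul_smul]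
    have hcc : c⁻¹ * (c⁻¹ * c) = c⁻¹ := by field_simp
    rw [hcc]
    congr 1
    rw [Fintype.sum_prod_type]
    rfl
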